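/- Let n ≥ 1 and m ≥ 1 be integers, let A be a real n×n matrix, let B be a real n×m matrix, and suppose the controllability matrix 𝒞 = [B, AB, A²B, …, A^{n−1}B] has rank n. Then for every integer N ≥ n and every α ∈ (0,1) there exist positive real numbers σ_1, …, σ_N with σ_1 + ⋯ + σ_N ≥ 1 such that for every x̄ ∈ ℝ^n there exist an input sequence ν_0, …, ν_{N−1} in ℝ^m and states x_0, x_1, …, x_N in ℝ^n with x_0 = x̄, x_{k+1} = A x_k + B ν_k for all 0 ≤ k < N, and Σ_{k=1}^N σ_k·‖x_k‖ ≤ (1−α)·‖x̄‖ (Euclidean norm). -/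

import Mathlib

open Matrix Finset

private lemma toEucl_mul {n p q : ℕ} (P : Matrix (Fin n) (Fin p) ℝ)
    (Q : Matrix (Fin p) (Fin q) ℝ) (v : EuclideanSpace ℝ (Fin q)) :
    Matrix.toEuclideanLin (P * Q) v = Matrix.toEuclideanLin P (Matrix.toEuclideanLin Q v) := by
  simp [Matrix.toEuclideanLin_apply, Matrix.mulVec_mulVec]

/-- Remark 2, controllable case: if the controllability matrix of
(A, B) has rank n, then for every horizon N ≥ n and every decay constant
α ∈ (0,1) one can choose positive weights σ₁,…,σ_N summing to at least 1 so that
from every initial state the average descent condition for V = Euclidean norm is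
satisfied along some predicted trajectory. -/
theorem stmt_6 (n m : ℕ) (hn : 1 ≤ n) (hm : 1 ≤ m)
    (A : Matrix (Fin n) (Fin n) ℝ) (B : Matrix (Fin n) (Fin m) ℝ)
    (hrank : (Matrix.of fun (i : Fin n) (p : Fin n × Fin m) =>
        (A ^ (p.1 : ℕ) * B) i p.2).rank = n) :
    ∀ N : ℕ, n ≤ N → ∀ α ∈ Set.Ioo (0 : ℝ) 1, ∃ σ : ℕ → ℝ,
      (∀ k ∈ Finset.Icc 1 N, 0 < σ k) ∧
      1 ≤ ∑ k ∈ Finset.Icc 1 N, σ k ∧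
      ∀ xbar : EuclideanSpace ℝ (Fin n),
        ∃ (ν : ℕ → EuclideanSpace ℝ (Fin m)) (x : ℕ → EuclideanSpace ℝ (Fin n)),
          x 0 = xbar ∧
          (∀ k < N, x (k + 1) =
            Matrix.toEuclideanLin A (x k) + Matrix.toEuclideanLin B (ν k)) ∧
          ∑ k ∈ Finset.Icc 1 N, σ k * ‖x k‖ ≤ (1 - α) * ‖xbar‖ := by
  intro N hN α hα
  obtain ⟨hα0, hα1⟩ := hα
  set C : Matrix (Fin n) (Fin n × Fin m) ℝ :=
    Matrix.of fun (i : Fin n) (p : Fin n × Fin m) => (A ^ (p.1 : ℕ) * B) i p.2 with hC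
  -- surjectivity of the controllability map
  have hrange : LinearMap.range C.mulVecLin = ⊤ := by
    apply Submodule.eq_top_of_finrank_eq
    rw [← Matrix.rank]
    simpa [hC] using hrank
  -- a linear right inverse
  obtain ⟨g, hg⟩ := C.mulVecLin.exists_rightInverse_of_surjective hrange
  -- the matrix steering A^n xbar to 0
  set G : Matrix (Fin n × Fin m) (Fin n) ℝ :=
    LinearMap.toMatrix' (g ∘ₗ (-(A ^ n)).mulVecLin) with hG
  have hCG : C * G = -(A ^ n) := by
    apply Matrix.toLin'.injective
    rw [Matrix.toLin'_mul, hG, Matrix.toLin'_toMatrix', Matrix.toLin'_apply' C,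
      Matrix.toLin'_apply' (-(A ^ n)), ← LinearMap.comp_assoc, hg, LinearMap.id_comp]
  set blockG : Fin n → Matrix (Fin m) (Fin n) ℝ :=
    fun k => Matrix.of fun q j => G (k, q) j with hblockG
  -- input matrices
  set V : ℕ → Matrix (Fin m) (Fin n) ℝ := fun k =>
    if h : k < n then blockG ⟨n - 1 - k, by omega⟩ else 0 with hV
  -- state matrices (closed form)
  set M : ℕ → Matrix (Fin n) (Fin n) ℝ := fun k =>
    A ^ k + ∑ j ∈ Finset.range k, A ^ (k - 1 - j) * B * V j with hM
  have hM0 : M 0 = 1 := by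
    show A ^ 0 + ∑ j ∈ Finset.range 0, A ^ (0 - 1 - j) * B * V j = 1
    simp
  have hMrec : ∀ k, M (k + 1) = A * M k + B * V k := by
    intro k
    have hMk : M k = A ^ k + ∑ j ∈ Finset.range k, A ^ (k - 1 - j) * B * V j := rfl
    have hMk1 : M (k + 1) =
        A ^ (k + 1) + ∑ j ∈ Finset.range (k + 1), A ^ (k + 1 - 1 - j) * B * V j := rfl
    rw [hMk1, hMk, Finset.sum_range_succ, Matrix.mul_add, Finset.mul_sum]
    have e1 : ∀ j ∈ Finset.range k,
        A * (A ^ (k - 1 - j) * B * V j) = A ^ (k + 1 - 1 - j) * B * V j := by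
      intro j hj
      rw [Finset.mem_range] at hj
      rw [← Matrix.mul_assoc, ← Matrix.mul_assoc, ← pow_succ']
      have h2 : k - 1 - j + 1 = k + 1 - 1 - j := by omega
      rw [h2]
    rw [Finset.sum_congr rfl e1, ← pow_succ']
    have h3 : k + 1 - 1 - k = 0 := by omega
    rw [h3, pow_zero, Matrix.one_mul]
    abel
  -- M n = 0
  have hMn : M n = 0 := by
    have hsum : ∑ j ∈ Finset.range n, A ^ (n - 1 - j) * B * V j = C * G := by
      rw [← Fin.sum_univ_eq_sum_range (fun j => A ^ (n - 1 - j) * B * V j) n]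
      have hterm : ∀ j : Fin n,
          A ^ (n - 1 - (j : ℕ)) * B * V (j : ℕ) =
            A ^ ((Fin.rev j : Fin n) : ℕ) * B * blockG (Fin.rev j) := by
        intro j
        have hrv : ((Fin.rev j : Fin n) : ℕ) = n - 1 - (j : ℕ) := by
          rw [Fin.val_rev]; omega
        have hv : V (j : ℕ) = blockG (Fin.rev j) := by
          show (if h : (j : ℕ) < n then blockG ⟨n - 1 - (j : ℕ), by omega⟩ else 0)
            = blockG (Fin.rev j)
          rw [dif_pos j.isLt]
          have he : (⟨n - 1 - (j : ℕ), by omega⟩ : Fin n) = Fin.rev j :=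
            Fin.ext (by simp only [Fin.val_rev]; omega)
          rw [he]
        rw [hv, hrv]
      rw [Finset.sum_congr rfl (fun j _ => hterm j)]
      rw [Fintype.sum_bijective Fin.rev Fin.rev_bijective
        (fun j => A ^ ((Fin.rev j : Fin n) : ℕ) * B * blockG (Fin.rev j))
        (fun k => A ^ (k : ℕ) * B * blockG k) (fun _ => rfl)]
      ext a b
      simp only [Matrix.sum_apply, Matrix.mul_apply, Fintype.sum_prod_type, hC, hblockG,
        Matrix.of_apply]
    show A ^ n + ∑ j ∈ Finset.range n, A ^ (n - 1 - j) * B * V j = 0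
    rw [hsum, hCG]
    simp
  -- M k = 0 for all k ≥ n
  have hMzero : ∀ k, n ≤ k → M k = 0 := by
    intro k hk
    induction k, hk using Nat.le_induction with
    | base => exact hMn
    | succ k hk ih =>
      rw [hMrec, ih]
      have : V k = 0 := by
        show (if h : k < n then blockG ⟨n - 1 - k, by omega⟩ else 0) = 0
        rw [dif_neg (Nat.not_lt.mpr hk)]
      rw [this]
      simp
  -- operator norm bound
  set L : ℕ → (EuclideanSpace ℝ (Fin n)) →L[ℝ] (EuclideanSpace ℝ (Fin n)) :=
    fun k => LinearMap.toContinuousLinearMap (Matrix.toEuclideanLin (M k)) with hL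
  set Cst : ℝ := ∑ k ∈ Finset.Icc 1 N, ‖L k‖ with hCst
  have hCst0 : 0 ≤ Cst := Finset.sum_nonneg fun _ _ => norm_nonneg _
  set ε : ℝ := (1 - α) / (N * (Cst + 1)) with hε
  have hNpos : (0 : ℝ) < N := by
    have : 1 ≤ N := le_trans hn hN
    exact_mod_cast Nat.lt_of_lt_of_le Nat.zero_lt_one this
  have hden : (0 : ℝ) < N * (Cst + 1) := by positivity
  have hεpos : 0 < ε := div_pos (by linarith) hden
  refine ⟨fun k => if k = N then 1 else ε, ?_, ?_, ?_⟩
  · intro k _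
    show (0 : ℝ) < if k = N then 1 else ε
    by_cases h : k = N
    · rw [if_pos h]; norm_num
    · rw [if_neg h]; exact hεpos
  · have hNmem : N ∈ Finset.Icc 1 N := by
      rw [Finset.mem_Icc]
      exact ⟨le_trans hn hN, le_refl N⟩
    calc (1 : ℝ) = (if N = N then (1 : ℝ) else ε) := by rw [if_pos rfl]
      _ ≤ ∑ k ∈ Finset.Icc 1 N, (if k = N then (1 : ℝ) else ε) := by
          refine Finset.single_le_sum (f := fun k => if k = N then (1 : ℝ) else ε)
            (fun k _ => ?_) hNmem
          show (0 : ℝ) ≤ if k = N then 1 else ε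
          by_cases h : k = N
          · rw [if_pos h]; norm_num
          · rw [if_neg h]; exact le_of_lt hεpos
  · intro xbar
    refine ⟨fun k => Matrix.toEuclideanLin (V k) xbar,
      fun k => Matrix.toEuclideanLin (M k) xbar, ?_, ?_, ?_⟩
    · show Matrix.toEuclideanLin (M 0) xbar = xbar
      rw [hM0]
      simp [Matrix.toEuclideanLin_apply, Matrix.one_mulVec]
    · intro k _
      show Matrix.toEuclideanLin (M (k + 1)) xbar =
        Matrix.toEuclideanLin A (Matrix.toEuclideanLin (M k) xbar) +
          Matrix.toEuclideanLin B (Matrix.toEuclideanLin (V k) xbar)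
      rw [hMrec k, map_add, LinearMap.add_apply, toEucl_mul, toEucl_mul]
    · -- final estimate
      have hbound : ∀ k ∈ Finset.Icc 1 N,
          (if k = N then (1 : ℝ) else ε) * ‖Matrix.toEuclideanLin (M k) xbar‖
            ≤ ε * (Cst * ‖xbar‖) := by
        intro k hk
        by_cases h : k = N
        · have hz : M k = 0 := hMzero k (h ▸ hN)
          rw [hz, if_pos h]
          simp only [map_zero, LinearMap.zero_apply, norm_zero, mul_zero]
          positivity
        · rw [if_neg h]
          apply mul_le_mul_of_nonneg_left _ (le_of_lt hεpos)
          have h1 : ‖Matrix.toEuclideanLin (M k) xbar‖ ≤ ‖L k‖ * ‖xbar‖ := by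
            exact (L k).le_opNorm xbar
          have h2 : ‖L k‖ ≤ Cst := by
            rw [hCst]
            exact Finset.single_le_sum (fun _ _ => norm_nonneg _) hk
          calc ‖Matrix.toEuclideanLin (M k) xbar‖ ≤ ‖L k‖ * ‖xbar‖ := h1
            _ ≤ Cst * ‖xbar‖ := mul_le_mul_of_nonneg_right h2 (norm_nonneg _)
      calc ∑ k ∈ Finset.Icc 1 N, (if k = N then (1 : ℝ) else ε) *
              ‖Matrix.toEuclideanLin (M k) xbar‖
          ≤ ∑ _k ∈ Finset.Icc 1 N, ε * (Cst * ‖xbar‖) := Finset.sum_le_sum hbound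
        _ = N * (ε * (Cst * ‖xbar‖)) := by
            rw [Finset.sum_const, Nat.card_Icc]
            simp [nsmul_eq_mul]
        _ ≤ (1 - α) * ‖xbar‖ := by
            rw [hε, show (N : ℝ) * ((1 - α) / (N * (Cst + 1)) * (Cst * ‖xbar‖)) =
              ((1 - α) * (N * (Cst * ‖xbar‖))) / (N * (Cst + 1)) from by ring,
              div_le_iff₀ hden]
            nlinarith [norm_nonneg xbar, hCst0, hNpos,
              mul_nonneg (mul_nonneg (sub_nonneg.mpr hα1.le) (norm_nonneg xbar)) hNpos.le]
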